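/- If α and β are non-zero complex numbers such that mα + nβ ≠ 0 for all positive integers m and n, then the only pair (p,q) of non-zero monic complex polynomials satisfying p(u)q(u) = p(u+β)q(u+α) is (p,q) = (1,1). -/

import Mathlib

open Polynomial

lemma rootMult_comp (p : Polynomial ℂ) (t a : ℂ) :
    (p.comp (X + C t)).rootMultiplicity a = p.rootMultiplicity (a + t) := by
  rw [rootMultiplicity_eq_natTrailingDegree, rootMultiplicity_eq_natTrailingDegree,
    comp_assoc]
  congr 2
  simp [add_comp, C_add]
  ring

lemma roots_comp (p : Polynomial ℂ) (t : ℂ) :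
    (p.comp (X + C t)).roots = p.roots.map (fun x => x - t) := by
  classical
  ext a
  rw [count_roots, rootMult_comp]
  have hinj : Function.Injective (fun x : ℂ => x - t) := fun x y hxy => by
    simpa using hxy
  have := Multiset.count_map_eq_count' (fun x : ℂ => x - t) p.roots hinj (a + t)
  simpa [count_roots] using this.symm

theorem stmt0 (α β : ℂ) (hα : α ≠ 0) (hβ : β ≠ 0)
    (h : ∀ m n : ℕ, 0 < m → 0 < n → (m : ℂ) * α + (n : ℂ) * β ≠ 0)
    (p q : Polynomial ℂ) (hp0 : p ≠ 0) (hq0 : q ≠ 0)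
    (hp : p.Monic) (hq : q.Monic)
    (heq : p * q = p.comp (X + C β) * q.comp (X + C α)) :
    p = 1 ∧ q = 1 := by
  have hpc : p.comp (X + C β) ≠ 0 := by
    rwa [comp_X_add_C_ne_zero_iff]
  have hqc : q.comp (X + C α) ≠ 0 := by
    rwa [comp_X_add_C_ne_zero_iff]
  have hroots : p.roots + q.roots
      = (p.comp (X + C β)).roots + (q.comp (X + C α)).roots := by
    rw [← roots_mul (mul_ne_zero hp0 hq0), ← roots_mul (mul_ne_zero hpc hqc), heq]
  have hsum := congrArg Multiset.sum hroots
  rw [Multiset.sum_add, Multiset.sum_add, roots_comp, roots_comp] at hsum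
  have hps : (p.roots.map (fun x => x - β)).sum
      = p.roots.sum - (Multiset.card p.roots : ℂ) * β := by
    rw [Multiset.sum_map_sub]
    simp [mul_comm]
  have hqs : (q.roots.map (fun x => x - α)).sum
      = q.roots.sum - (Multiset.card q.roots : ℂ) * α := by
    rw [Multiset.sum_map_sub]
    simp [mul_comm]
  rw [hps, hqs] at hsum
  have hcardp : Multiset.card p.roots = p.natDegree :=
    (splits_iff_card_roots.mp (IsAlgClosed.splits p))
  have hcardq : Multiset.card q.roots = q.natDegree :=
    (splits_iff_card_roots.mp (IsAlgClosed.splits q))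
  rw [hcardp, hcardq] at hsum
  have key : (q.natDegree : ℂ) * α + (p.natDegree : ℂ) * β = 0 := by
    linear_combination hsum
  have hp1 : p.natDegree = 0 := by
    by_contra hpn
    have hq1 : q.natDegree ≠ 0 := by
      intro hqn
      rw [hqn] at key
      simp at key
      rcases key with k | k
      · exact hpn (by simpa using k)
      · exact hβ k
    exact h q.natDegree p.natDegree (Nat.pos_of_ne_zero hq1) (Nat.pos_of_ne_zero hpn) key
  rw [hp1] at key
  simp at key
  have hq1 : q.natDegree = 0 := by
    rcases key with k | k
    · exact (by simpa using k)
    · exact absurd k hα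
  exact ⟨hp.natDegree_eq_zero.mp hp1, hq.natDegree_eq_zero.mp hq1⟩
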